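/- arXiv:2106.15426 — 3 statements merged into one kernel-verified Lean document; each statement's English description precedes it below -/
import Mathlib

section
/- For y ≥ ỹ, the supremum of u(c,l) - (c+wl)y over c ≥ 0 and 0 ≤ l ≤ L equals A₂ y^{-(1-k)/k}, where A₂ = (k/(δ(1-k))) ((1-δ)/(δw))^{(1-k)(1-δ)/k}. -/
open Real

private lemma eq_of_log_eq' {x y : ℝ} (hx : 0 < x) (hy : 0 < y)
    (h : Real.log x = Real.log y) : x = y :=
  Real.log_injOn_pos (Set.mem_Ioi.mpr hx) (Set.mem_Ioi.mpr hy) h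

theorem stmt_3 (δ k w L y : ℝ) (hδ0 : 0 < δ) (hδ1 : δ < 1) (hk : 1 < k)
    (hw : 0 < w) (hL : 0 < L) (hy0 : 0 < y)
    (hy : L ^ (-k) * ((1 - δ) / (δ * w)) ^ (1 - δ * (1 - k)) ≤ y) :
    IsLUB {v : ℝ | ∃ c l : ℝ, 0 < c ∧ 0 < l ∧ l ≤ L ∧
        v = (c ^ δ * l ^ (1 - δ)) ^ (1 - k) / (δ * (1 - k)) - (c + w * l) * y}
      (k / (δ * (1 - k)) * ((1 - δ) / (δ * w)) ^ ((1 - k) * (1 - δ) / k)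
        * y ^ (-(1 - k) / k)) := by
  have hk1 : (0:ℝ) < k - 1 := by linarith
  have h1δ : (0:ℝ) < 1 - δ := by linarith
  have hk0 : (0:ℝ) < k := by linarith
  have hδk1 : δ * (1 - k) = -(δ * (k - 1)) := by ring
  -- the optimal point
  set l₀ : ℝ := y ^ (-1/k) * ((1 - δ) / (δ * w)) ^ ((1 - δ * (1 - k))/k) with hl0_def
  have hl₀ : 0 < l₀ := by positivity
  set c₀ : ℝ := δ * w / (1 - δ) * l₀ with hc0_def
  have hc₀ : 0 < c₀ := by positivity
  have hl₀L : l₀ ≤ L := by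
    have h1 : l₀ ^ (-k) = y / ((1 - δ) / (δ * w)) ^ (1 - δ * (1 - k)) := by
      apply eq_of_log_eq' (by positivity) (by positivity)
      rw [hl0_def]
      simp (disch := positivity) only [Real.log_rpow, Real.log_mul, Real.log_div]
      field_simp
      ring
    have h2 : L ^ (-k) ≤ l₀ ^ (-k) := by
      rw [h1, le_div_iff₀ (by positivity)]
      exact hy
    exact (Real.rpow_le_rpow_iff_of_neg hL hl₀ (by linarith : -k < 0)).mp h2
  -- value at the optimal point
  have hsum0 : c₀ + w * l₀ = w / (1 - δ) * l₀ := by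
    rw [hc0_def]; field_simp; ring
  have I1 : (c₀ ^ δ * l₀ ^ (1 - δ)) ^ (1 - k)
      = ((1 - δ) / (δ * w)) ^ ((1 - k) * (1 - δ) / k) * y ^ (-(1 - k) / k) := by
    apply eq_of_log_eq' (by positivity) (by positivity)
    rw [hc0_def, hl0_def]
    simp (disch := positivity) only [Real.log_rpow, Real.log_mul, Real.log_div]
    field_simp
    ring
  have I2 : w / (1 - δ) * l₀ * y
      = 1/δ * (((1 - δ) / (δ * w)) ^ ((1 - k) * (1 - δ) / k) * y ^ (-(1 - k) / k)) := by
    apply eq_of_log_eq' (by positivity) (by positivity)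
    rw [hl0_def]
    simp (disch := positivity) only [Real.log_rpow, Real.log_mul, Real.log_div]
    field_simp
    simp only [Real.log_one]; ring
  have h1kne : (1:ℝ) - k ≠ 0 := by intro h; linarith
  have hval : (c₀ ^ δ * l₀ ^ (1 - δ)) ^ (1 - k) / (δ * (1 - k)) - (c₀ + w * l₀) * y
      = k / (δ * (1 - k)) * ((1 - δ) / (δ * w)) ^ ((1 - k) * (1 - δ) / k)
        * y ^ (-(1 - k) / k) := by
    rw [I1, hsum0, I2, show k / (δ * (1 - k)) * ((1 - δ) / (δ * w)) ^ ((1 - k) * (1 - δ) / k)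
        * y ^ (-(1 - k) / k) = k / (δ * (1 - k)) * (((1 - δ) / (δ * w)) ^ ((1 - k) * (1 - δ) / k)
        * y ^ (-(1 - k) / k)) from by ring]
    generalize (((1 - δ) / (δ * w)) ^ ((1 - k) * (1 - δ) / k) * y ^ (-(1 - k) / k) : ℝ) = A
    field_simp
    ring
  clear_value c₀ l₀
  constructor
  · rintro v ⟨c, l, hc, hl, hlL, rfl⟩
    have hX : (0:ℝ) < c ^ δ * l ^ (1 - δ) := by positivity
    have hp1 : (0:ℝ) < k / (δ * (k - 1)) * (c ^ δ * l ^ (1 - δ)) ^ (1 - k) := by positivity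
    have hp2 : (0:ℝ) < k / (δ * (k - 1)) * (c * y) := by positivity
    have hp3 : (0:ℝ) < k / ((1 - δ) * (k - 1)) * (w * l * y) := by positivity
    have hsum : 1/k + δ*(k-1)/k + (1-δ)*(k-1)/k = 1 := by field_simp; ring
    have hAM := Real.geom_mean_le_arith_mean3_weighted
      (by positivity : (0:ℝ) ≤ 1/k) (by positivity : (0:ℝ) ≤ δ*(k-1)/k)
      (by positivity : (0:ℝ) ≤ (1-δ)*(k-1)/k) hp1.le hp2.le hp3.le hsum
    have hG : (k / (δ * (k - 1)) * (c ^ δ * l ^ (1 - δ)) ^ (1 - k)) ^ (1/k)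
        * (k / (δ * (k - 1)) * (c * y)) ^ (δ*(k-1)/k)
        * (k / ((1 - δ) * (k - 1)) * (w * l * y)) ^ ((1-δ)*(k-1)/k)
        = k / (δ * (k - 1)) * ((1 - δ) / (δ * w)) ^ ((1 - k) * (1 - δ) / k)
          * y ^ (-(1 - k) / k) := by
      apply eq_of_log_eq' (by positivity) (by positivity)
      simp (disch := positivity) only [Real.log_rpow, Real.log_mul, Real.log_div]
      field_simp
      ring
    rw [hG] at hAM
    have e1 : 1 / k * (k / (δ * (k - 1)) * (c ^ δ * l ^ (1 - δ)) ^ (1 - k)) +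
        δ * (k - 1) / k * (k / (δ * (k - 1)) * (c * y)) +
        (1 - δ) * (k - 1) / k * (k / ((1 - δ) * (k - 1)) * (w * l * y))
        = (c ^ δ * l ^ (1 - δ)) ^ (1 - k) / (δ * (k - 1)) + c * y + w * l * y := by
      field_simp
    have e2 : (c ^ δ * l ^ (1 - δ)) ^ (1 - k) / (δ * (1 - k))
        = -((c ^ δ * l ^ (1 - δ)) ^ (1 - k) / (δ * (k - 1))) := by
      rw [hδk1, div_neg]
    have e3 : k / (δ * (1 - k)) * ((1 - δ) / (δ * w)) ^ ((1 - k) * (1 - δ) / k)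
        * y ^ (-(1 - k) / k)
        = -(k / (δ * (k - 1)) * ((1 - δ) / (δ * w)) ^ ((1 - k) * (1 - δ) / k)
          * y ^ (-(1 - k) / k)) := by
      rw [hδk1, div_neg]; ring
    rw [e1] at hAM
    rw [e2, e3]
    linarith [hAM]
  · intro b hb
    exact hb ⟨c₀, l₀, hc₀, hl₀, hl₀L, hval.symm⟩
end

section
/- For 0 < y < ỹ, the supremum of u(c,l) - (c+wl)y over c ≥ 0 and 0 ≤ l ≤ L equals A₁ y^{δ(1-k)/(δ(1-k)-1)} - wLy, where A₁ = ((1-δ+δk)/(δ(1-k))) L^{-(1-k)(1-δ)/(δ(1-k)-1)}, attained at l = L and c = L^{-(1-k)(1-δ)/(δ(1-k)-1)} y^{1/(δ(1-k)-1)}. -/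
lemma tangent_neg {p s t : ℝ} (hp : p < 0) (hs : 0 < s) (ht : 0 < t) :
    s ^ p + p * s ^ (p - 1) * (t - s) ≤ t ^ p := by
  have h1p : (0:ℝ) < 1 - p := by linarith
  have hw1 : (0:ℝ) ≤ 1 / (1 - p) := by positivity
  have hw2 : (0:ℝ) ≤ (-p) / (1 - p) := div_nonneg (by linarith) h1p.le
  have hsum : 1 / (1 - p) + (-p) / (1 - p) = 1 := by field_simp; ring
  have hz1 : (0:ℝ) ≤ t ^ p := (Real.rpow_pos_of_pos ht p).le
  have hz2 : (0:ℝ) ≤ s ^ (p - 1) * t := by positivity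
  have key := Real.geom_mean_le_arith_mean2_weighted hw1 hw2 hz1 hz2 hsum
  have hlhs : (t ^ p) ^ (1 / (1 - p)) * (s ^ (p - 1) * t) ^ ((-p) / (1 - p)) = s ^ p := by
    rw [Real.mul_rpow (by positivity) ht.le, ← Real.rpow_mul ht.le, ← Real.rpow_mul hs.le,
      mul_comm (s ^ ((p - 1) * (-p / (1 - p)))), ← mul_assoc, ← Real.rpow_add ht]
    have e1 : p * (1 / (1 - p)) + -p / (1 - p) = 0 := by field_simp; ring
    have e2 : (p - 1) * (-p / (1 - p)) = p := by field_simp; ring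
    rw [e1, e2, Real.rpow_zero, one_mul]
  rw [hlhs, div_mul_eq_mul_div, div_mul_eq_mul_div, ← add_div,
    le_div_iff₀ h1p] at key
  have hss : s ^ (p - 1) * s = s ^ p := by
    rw [Real.rpow_sub hs, Real.rpow_one, div_mul_cancel₀ _ hs.ne']
  nlinarith [key, hss]

theorem stmt_4 (δ k w L y : ℝ) (hδ0 : 0 < δ) (hδ1 : δ < 1) (hk : 1 < k)
    (hw : 0 < w) (hL : 0 < L) (hy0 : 0 < y)
    (hy : y < L ^ (-k) * ((1 - δ) / (δ * w)) ^ (1 - δ * (1 - k))) :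
    IsGreatest {v : ℝ | ∃ c l : ℝ, 0 < c ∧ 0 < l ∧ l ≤ L ∧
        v = (c ^ δ * l ^ (1 - δ)) ^ (1 - k) / (δ * (1 - k)) - (c + w * l) * y}
      ((1 - δ + δ * k) / (δ * (1 - k)) * L ^ (-((1 - k) * (1 - δ)) / (δ * (1 - k) - 1))
        * y ^ (δ * (1 - k) / (δ * (1 - k) - 1)) - w * L * y) ∧
    (let c₀ : ℝ := L ^ (-((1 - k) * (1 - δ)) / (δ * (1 - k) - 1)) * y ^ (1 / (δ * (1 - k) - 1));
      (c₀ ^ δ * L ^ (1 - δ)) ^ (1 - k) / (δ * (1 - k)) - (c₀ + w * L) * y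
        = (1 - δ + δ * k) / (δ * (1 - k)) * L ^ (-((1 - k) * (1 - δ)) / (δ * (1 - k) - 1))
            * y ^ (δ * (1 - k) / (δ * (1 - k) - 1)) - w * L * y) := by
  have hα : δ * (1 - k) < 0 := mul_neg_of_pos_of_neg hδ0 (by linarith)
  set α := δ * (1 - k) with hα_eq
  have hα1 : α - 1 < 0 := by linarith
  have hα1' : α - 1 ≠ 0 := ne_of_lt hα1
  have hαne : α ≠ 0 := ne_of_lt hα
  set γ := -((1 - k) * (1 - δ)) / (α - 1) with hγ_eq
  set e := α / (α - 1) with he_eq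
  clear_value α γ e
  have hγ : γ < 0 := by
    rw [hγ_eq]
    apply div_neg_of_pos_of_neg _ hα1
    nlinarith
  have hβ : (1 - δ) * (1 - k) < 0 := mul_neg_of_pos_of_neg (by linarith) (by linarith)
  have hd1 : δ * (1 - k) - 1 ≠ 0 := by
    intro h; exact hα1' (by rw [hα_eq]; linarith [h])
  have hδne : δ ≠ 0 := hδ0.ne'
  have h1δ : (1:ℝ) - δ ≠ 0 := by linarith
  have hdα : δ * (1 - k) ≠ 0 := by rw [← hα_eq]; exact hαne
  -- rewriting the utility term
  have hrw : ∀ x : ℝ, 0 < x → ∀ l : ℝ, 0 < l →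
      (x ^ δ * l ^ (1 - δ)) ^ (1 - k) = x ^ α * l ^ ((1 - δ) * (1 - k)) := by
    intro x hx l hl
    rw [Real.mul_rpow (by positivity) (by positivity), ← Real.rpow_mul hx.le,
      ← Real.rpow_mul hl.le, hα_eq]
  -- value at the candidate optimum, for each l
  have keyval : ∀ l : ℝ, 0 < l →
      ((l ^ γ * y ^ (1 / (α - 1))) ^ δ * l ^ (1 - δ)) ^ (1 - k) / α
          - (l ^ γ * y ^ (1 / (α - 1)) + w * l) * y
        = (1 - δ + δ * k) / α * l ^ γ * y ^ e - w * l * y := by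
    intro l hl
    have hcs : (0:ℝ) < l ^ γ * y ^ (1 / (α - 1)) := by positivity
    have h1 : ((l ^ γ * y ^ (1 / (α - 1))) ^ δ * l ^ (1 - δ)) ^ (1 - k)
        = l ^ γ * y ^ e := by
      rw [hrw _ hcs l hl, Real.mul_rpow (by positivity) (by positivity),
        ← Real.rpow_mul hl.le, ← Real.rpow_mul hy0.le, mul_right_comm,
        ← Real.rpow_add hl]
      congr 1
      · congr 1
        rw [hγ_eq, hα_eq]
        linear_combination (-((1 - k) * (1 - δ))) * mul_inv_cancel₀ hd1
      · congr 1
        rw [he_eq, hα_eq]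
        field_simp [hd1]
    have h2 : (l ^ γ * y ^ (1 / (α - 1))) * y = l ^ γ * y ^ e := by
      rw [mul_assoc, ← Real.rpow_add_one hy0.ne']
      congr 2
      rw [he_eq]
      field_simp; ring
    have hcoef : (1 - δ + δ * k) / α = 1 / α - 1 := by
      rw [hα_eq]
      field_simp [hdα, show (1:ℝ) - k ≠ 0 by linarith]
      ring
    rw [h1, hcoef]
    linear_combination -h2 * 1
  have hone : (0:ℝ) < 1 - δ + δ * k := by
    nlinarith [mul_neg_of_pos_of_neg hδ0 (show (1:ℝ) - k < 0 by linarith)]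
  refine ⟨⟨⟨L ^ γ * y ^ (1 / (α - 1)), L, by positivity, hL, le_refl L,
      (keyval L hL).symm⟩, ?_⟩, keyval L hL⟩
  rintro v ⟨c, l, hc, hl, hlL, rfl⟩
  have hval := keyval l hl
  set cs := l ^ γ * y ^ (1 / (α - 1)) with hcs_eq
  clear_value cs
  have hcs : (0:ℝ) < cs := by rw [hcs_eq]; positivity
  have hlb : (0:ℝ) < l ^ ((1 - δ) * (1 - k)) := Real.rpow_pos_of_pos hl _
  rw [hrw _ hcs l hl] at hval
  rw [hrw c hc l hl]
  -- step 1 : optimality in c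
  have hcsy : cs ^ (α - 1) * l ^ ((1 - δ) * (1 - k)) = y := by
    rw [hcs_eq, Real.mul_rpow (by positivity) (by positivity), ← Real.rpow_mul hl.le,
      ← Real.rpow_mul hy0.le, one_div, inv_mul_cancel₀ hα1', Real.rpow_one,
      mul_right_comm, ← Real.rpow_add hl,
      show γ * (α - 1) + (1 - δ) * (1 - k) = 0 by
        rw [hγ_eq]; field_simp [hα1']; ring,
      Real.rpow_zero, one_mul]
  have htan := tangent_neg hα hcs hc
  have h1 := mul_le_mul_of_nonneg_right htan hlb.le
  have h2 := mul_le_mul_of_nonpos_right h1 (inv_nonpos.mpr hα.le)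
  have hainv : α * α⁻¹ = 1 := mul_inv_cancel₀ hαne
  have hA : (cs ^ α + α * cs ^ (α - 1) * (c - cs)) * l ^ ((1 - δ) * (1 - k)) * α⁻¹
      = cs ^ α * l ^ ((1 - δ) * (1 - k)) * α⁻¹ + y * (c - cs) := by
    linear_combination (c - cs) * α * α⁻¹ * hcsy + (c - cs) * y * hainv
  have S1 : c ^ α * l ^ ((1 - δ) * (1 - k)) / α - c * y
      ≤ cs ^ α * l ^ ((1 - δ) * (1 - k)) / α - cs * y := by
    rw [div_eq_mul_inv, div_eq_mul_inv]
    nlinarith [h2, hA]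
  -- step 2 : optimality in l (monotonicity up to L)
  have htan2 := tangent_neg hγ hL hl
  have hC : (1 - δ + δ * k) / α * y ^ e < 0 :=
    mul_neg_of_neg_of_pos (div_neg_of_pos_of_neg hone hα) (Real.rpow_pos_of_pos hy0 e)
  have hD : (0:ℝ) < (1 - δ) / (δ * w) := div_pos (by linarith) (by positivity)
  have hmono := Real.rpow_lt_rpow_of_neg hy0 hy
    (show 1 / (α - 1) < 0 from div_neg_of_pos_of_neg one_pos hα1)
  have hLD : (L ^ (-k) * ((1 - δ) / (δ * w)) ^ (1 - α)) ^ (1 / (α - 1))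
      = L ^ (-k * (1 / (α - 1))) * (δ * w / (1 - δ)) := by
    rw [Real.mul_rpow (by positivity) (by positivity), ← Real.rpow_mul hL.le,
      ← Real.rpow_mul hD.le,
      show (1 - α) * (1 / (α - 1)) = -1 by field_simp [hα1']; ring,
      Real.rpow_neg_one, inv_div]
  rw [hLD] at hmono
  have hLL : L ^ (-k * (1 / (α - 1))) * L ^ (γ - 1) = 1 := by
    rw [← Real.rpow_add hL,
      show -k * (1 / (α - 1)) + (γ - 1) = 0 by
        rw [hγ_eq, hα_eq]; field_simp [hd1]; ring,
      Real.rpow_zero]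
  have hsc : (1 - δ) / δ * (δ * w / (1 - δ)) = w := by
    field_simp
  have hK : w * y < (1 - δ) / δ * L ^ (γ - 1) * y ^ (1 / (α - 1)) * y := by
    have hpos : (0:ℝ) < (1 - δ) / δ * L ^ (γ - 1) * y :=
      mul_pos (mul_pos (div_pos (by linarith) hδ0) (Real.rpow_pos_of_pos hL _)) hy0
    have h5 := mul_lt_mul_of_pos_left hmono hpos
    calc w * y = ((1 - δ) / δ * (δ * w / (1 - δ))) * y * 1 := by rw [hsc]; ring
      _ = (1 - δ) / δ * L ^ (γ - 1) * y
            * (L ^ (-k * (1 / (α - 1))) * (δ * w / (1 - δ))) := by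
          linear_combination (-((1 - δ) / δ * (δ * w / (1 - δ)) * y)) * hLL
      _ < _ := by linarith [h5]
  have hcoef2 : (1 - δ + δ * k) / α * γ = (1 - δ) / δ := by
    rw [hγ_eq, hα_eq]
    field_simp [hd1, hdα, show (1:ℝ) - k ≠ 0 by linarith]
    ring
  have hye : y ^ e = y ^ (1 / (α - 1)) * y := by
    rw [← Real.rpow_add_one hy0.ne']
    congr 1
    rw [he_eq]
    field_simp; ring
  have hQeq : (1 - δ + δ * k) / α * y ^ e * γ * L ^ (γ - 1)
      = (1 - δ) / δ * L ^ (γ - 1) * y ^ (1 / (α - 1)) * y := by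
    rw [hye]
    linear_combination (y ^ (1 / (α - 1)) * y * L ^ (γ - 1)) * hcoef2
  have hQ : w * y ≤ (1 - δ + δ * k) / α * y ^ e * γ * L ^ (γ - 1) := by
    rw [hQeq]; exact hK.le
  have h3 := mul_le_mul_of_nonpos_left htan2 hC.le
  have hmul := mul_le_mul_of_nonpos_right hQ (sub_nonpos.mpr hlL)
  linarith [S1, hval, h3, hmul]
end

section
/- On the interval 0 < z < αỹ, the difference of second derivatives ũ''(z) - (1/α²) ũ''(z/α) is strictly negative, where ũ(z) = A₁ z^{δ(1-k)/(δ(1-k)-1)} - wLz on (0, ỹ). -/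
open Real Filter

lemma aux_d1 (c a b : ℝ) {x : ℝ} (hx : 0 < x) :
    deriv (fun z : ℝ => c * z ^ a - b * z) x = c * (a * x ^ (a - 1)) - b := by
  have h : HasDerivAt (fun z : ℝ => c * z ^ a - b * z)
      (c * (a * x ^ (a - 1)) - b * 1) x :=
    ((Real.hasDerivAt_rpow_const (Or.inl hx.ne')).const_mul c).sub
      ((hasDerivAt_id x).const_mul b)
  simpa using h.deriv

lemma aux_d2 (c a b : ℝ) {x : ℝ} (hx : 0 < x) :
    deriv (fun z : ℝ => c * (a * z ^ (a - 1)) - b) x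
      = c * a * ((a - 1) * x ^ (a - 1 - 1)) := by
  have h : HasDerivAt (fun z : ℝ => c * a * z ^ (a - 1) - b)
      (c * a * ((a - 1) * x ^ (a - 1 - 1))) x :=
    ((Real.hasDerivAt_rpow_const (p := a - 1) (Or.inl hx.ne')).const_mul (c * a)).sub_const b
  rw [← h.deriv]
  congr 1
  ext z
  ring

lemma aux_dd (c a b : ℝ) {x : ℝ} (hx : 0 < x) :
    deriv (deriv (fun z : ℝ => c * z ^ a - b * z)) x
      = c * a * ((a - 1) * x ^ (a - 1 - 1)) := by
  have he : deriv (fun z : ℝ => c * z ^ a - b * z)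
      =ᶠ[nhds x] fun z => c * (a * z ^ (a - 1)) - b :=
    (eventually_gt_nhds hx).mono fun z hz => aux_d1 c a b hz
  rw [he.deriv_eq, aux_d2 c a b hx]

theorem stmt_8 (δ k w L α : ℝ) (hδ0 : 0 < δ) (hδ1 : δ < 1) (hk : 1 < k)
    (hw : 0 < w) (hL : 0 < L) (hα0 : 0 < α) (hα1 : α < 1)
    (A₁ ytil : ℝ)
    (hA₁ : A₁ = (1 - δ + δ * k) / (δ * (1 - k)) * L ^ (-((1 - k) * (1 - δ)) / (δ * (1 - k) - 1)))
    (hytil : ytil = L ^ (-k) * ((1 - δ) / (δ * w)) ^ (1 - δ * (1 - k)))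
    (f : ℝ → ℝ)
    (hf : ∀ z : ℝ, f z = A₁ * z ^ (δ * (1 - k) / (δ * (1 - k) - 1)) - w * L * z) :
    ∀ z : ℝ, 0 < z → z < α * ytil →
      deriv (deriv f) z - 1 / α ^ 2 * deriv (deriv f) (z / α) < 0 := by
  intro z hz _
  have hfe : f = fun z : ℝ => A₁ * z ^ (δ * (1 - k) / (δ * (1 - k) - 1)) - w * L * z :=
    funext hf
  set p : ℝ := δ * (1 - k) / (δ * (1 - k) - 1) with hp
  have hs : δ * (1 - k) < 0 := mul_neg_of_pos_of_neg hδ0 (by linarith)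
  have hs1 : δ * (1 - k) - 1 < 0 := by linarith
  have hp0 : 0 < p := div_pos_of_neg_of_neg hs hs1
  have hp1 : p < 1 := by
    rw [hp, div_lt_one_of_neg hs1]; linarith
  have hA₁neg : A₁ < 0 := by
    rw [hA₁]
    apply mul_neg_of_neg_of_pos
    · apply div_neg_of_pos_of_neg (by nlinarith) hs
    · exact Real.rpow_pos_of_pos hL _
  have hC : 0 < A₁ * p * (p - 1) :=
    mul_pos_of_neg_of_neg (mul_neg_of_neg_of_pos hA₁neg hp0) (by linarith)
  have hzα : 0 < z / α := div_pos hz hα0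
  rw [hfe, aux_dd A₁ p (w * L) hz, aux_dd A₁ p (w * L) hzα]
  have hdiv : (z / α) ^ (p - 1 - 1) = z ^ (p - 1 - 1) / α ^ (p - 1 - 1) :=
    Real.div_rpow hz.le hα0.le (p - 1 - 1)
  rw [hdiv]
  have hαp : (1 : ℝ) < α ^ (-p) :=
    Real.one_lt_rpow_iff_of_pos hα0 |>.2 (Or.inr ⟨hα1, by linarith⟩)
  have hα2 : (α : ℝ) ^ (2 : ℕ) * α ^ (p - 1 - 1) = α ^ p := by
    rw [← Real.rpow_natCast α 2, ← Real.rpow_add hα0]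
    norm_num
    congr 1
    ring
  have key : 1 / α ^ 2 * (z ^ (p - 1 - 1) / α ^ (p - 1 - 1)) = z ^ (p - 1 - 1) * α ^ (-p) := by
    rw [Real.rpow_neg hα0.le, ← hα2]
    have h1 : (α : ℝ) ^ (p - 1 - 1) ≠ 0 := (Real.rpow_pos_of_pos hα0 _).ne'
    field_simp
  have hzp : 0 < z ^ (p - 1 - 1) := Real.rpow_pos_of_pos hz _
  nlinarith [mul_pos hC hzp, mul_pos (mul_pos hC hzp) (sub_pos.2 hαp)]
end
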